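/- Let X be a real Hilbert space and suppose U, V ⊂ X are closed linear subspaces such that U ∩ V = {0} and U + V is closed. Let {A_n} and {B_n} be sequences of nonempty closed convex subsets of X such that A_n → U and B_n → V in the Attouch-Wets sense. Then for every starting point a₀ ∈ X, the corresponding perturbed alternating projections sequences {a_n} and {b_n} converge to 0 in norm. -/

import Mathlib

open Filter Metric Topology

set_option maxHeartbeats 1000000

/-- Attouch–Wets convergence of a sequence of sets:
for every `N`, `sup_{‖x‖ ≤ N} |dist(x, Aₙ) − dist(x, L)| → 0`. -/
def AWTendsto {X : Type*} [NormedAddCommGroup X] (A : ℕ → Set X) (L : Set X) : Prop :=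
  ∀ N : ℕ, ∀ ε : ℝ, 0 < ε → ∃ n₀ : ℕ, ∀ n ≥ n₀, ∀ x : X, ‖x‖ ≤ (N : ℝ) →
    |Metric.infDist x (A n) - Metric.infDist x L| < ε

/-- `p` is a metric projection (nearest point) of `x` onto `K`. -/
def IsProjOn {X : Type*} [NormedAddCommGroup X] (K : Set X) (x p : X) : Prop :=
  p ∈ K ∧ ∀ y ∈ K, dist x p ≤ dist x y

/-- `a`, `b` are the perturbed alternating projections sequences w.r.t. `A`, `B`
with starting point `a₀`: `bₙ = P_{Bₙ}(a_{n−1})` and `aₙ = P_{Aₙ}(bₙ)` for `n ≥ 1`. -/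
def IsPerturbedAPS {X : Type*} [NormedAddCommGroup X]
    (A B : ℕ → Set X) (a₀ : X) (a b : ℕ → X) : Prop :=
  a 0 = a₀ ∧ ∀ n : ℕ,
    IsProjOn (B (n + 1)) (a n) (b (n + 1)) ∧ IsProjOn (A (n + 1)) (b (n + 1)) (a (n + 1))

section Aux

variable {X : Type*} [NormedAddCommGroup X] [InnerProductSpace ℝ X]

lemma aux_pair_ineq (C s I D : ℝ) (hC1 : 1 ≤ C) (hD : D = 2*s^2 - 2*(s*I))
    (h : s^2 ≤ C^2 * D) : s*I ≤ (1 - 1/(2*C^2))*s*s := by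
  have h2C : (0:ℝ) < 2*C^2 := by positivity
  rw [← mul_le_mul_iff_of_pos_right h2C]
  have h7 : (1 - 1/(2*C^2)) * s * s * (2*C^2) = (2*C^2-1)*s^2 := by
    field_simp
  rw [h7]
  nlinarith

lemma aux_angle [CompleteSpace X]
    (U V : Submodule ℝ X) (hUc : IsClosed (U : Set X)) (hVc : IsClosed (V : Set X))
    (hUV : U ⊓ V = ⊥) (hsum : IsClosed ((U ⊔ V : Submodule ℝ X) : Set X)) :
    ∃ c : ℝ, 0 ≤ c ∧ c < 1 ∧ ∀ u ∈ U, ∀ v ∈ V, inner ℝ u v ≤ c * (‖u‖ * ‖v‖) := by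
  obtain ⟨C, hC1, hbound⟩ : ∃ C : ℝ, 1 ≤ C ∧
      ∀ u ∈ U, ∀ v ∈ V, ‖u‖ ≤ C * ‖u - v‖ ∧ ‖v‖ ≤ C * ‖u - v‖ := by
    haveI : CompleteSpace ↥U := hUc.completeSpace_coe
    haveI : CompleteSpace ↥V := hVc.completeSpace_coe
    haveI : CompleteSpace ↥(U ⊔ V) := hsum.completeSpace_coe
    set f : ↥U × ↥V →ₗ[ℝ] X := (U.subtype).coprod (V.subtype) with hf
    have hmem : ∀ c : ↥U × ↥V, f c ∈ U ⊔ V := by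
      intro c
      exact Submodule.mem_sup.2 ⟨c.1, c.1.2, c.2, c.2.2, rfl⟩
    set g0 : ↥U × ↥V →ₗ[ℝ] ↥(U ⊔ V) := f.codRestrict (U ⊔ V) hmem with hg0
    have hcont : Continuous g0 := by
      apply Continuous.subtype_mk
      exact (continuous_subtype_val.comp continuous_fst).add
        (continuous_subtype_val.comp continuous_snd)
    set g : ↥U × ↥V →L[ℝ] ↥(U ⊔ V) := { toLinearMap := g0, cont := hcont } with hg
    have hker : LinearMap.ker (g : ↥U × ↥V →ₗ[ℝ] ↥(U ⊔ V)) = ⊥ := by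
      rw [LinearMap.ker_eq_bot']
      intro m hm
      have h0 : (m.1 : X) + (m.2 : X) = 0 := by
        have := congrArg (Subtype.val) hm
        simpa [g, g0, f] using this
      have h1 : (m.1 : X) ∈ U ⊓ V := by
        refine ⟨m.1.2, ?_⟩
        have : (m.1 : X) = -(m.2 : X) := eq_neg_of_add_eq_zero_left h0
        rw [this]; exact neg_mem m.2.2
      rw [hUV] at h1
      have h2 : (m.1 : X) = 0 := h1
      have h3 : (m.2 : X) = 0 := by rw [h2] at h0; simpa using h0
      have : m = 0 := by
        apply Prod.ext <;> [skip; skip] <;> exact Subtype.ext (by assumption)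
      exact this
    have hrange : LinearMap.range (g : ↥U × ↥V →ₗ[ℝ] ↥(U ⊔ V)) = ⊤ := by
      rw [LinearMap.range_eq_top]
      rintro ⟨w, hw⟩
      obtain ⟨y, hy, z, hz, hyz⟩ := Submodule.mem_sup.1 hw
      exact ⟨(⟨y, hy⟩, ⟨z, hz⟩), Subtype.ext (by simpa [g, g0, f] using hyz)⟩
    set e := ContinuousLinearEquiv.ofBijective g hker hrange with he
    refine ⟨max 1 ‖(e.symm : ↥(U ⊔ V) →L[ℝ] ↥U × ↥V)‖, le_max_left _ _, ?_⟩
    set C : ℝ := max 1 ‖(e.symm : ↥(U ⊔ V) →L[ℝ] ↥U × ↥V)‖ with hC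
    intro u hu v hv
    set pu : ↥U := ⟨u, hu⟩
    set pv : ↥V := ⟨-v, neg_mem hv⟩
    set y := g (pu, pv) with hy
    have hyval : (y : X) = u - v := by simp [y, g, g0, f, pu, pv, sub_eq_add_neg]
    have hsymm : e.symm y = (pu, pv) := e.symm_apply_apply (pu, pv)
    have h1 : ‖e.symm y‖ ≤ C * ‖y‖ :=
      le_trans ((e.symm : ↥(U ⊔ V) →L[ℝ] ↥U × ↥V).le_opNorm y)
        (by apply mul_le_mul_of_nonneg_right (le_max_right _ _) (norm_nonneg _))
    rw [hsymm] at h1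
    have hyn : ‖y‖ = ‖u - v‖ := by rw [← hyval]; rfl
    have hprod : ‖(pu, pv)‖ = max ‖pu‖ ‖pv‖ := rfl
    have hpu : ‖pu‖ = ‖u‖ := rfl
    have hpv : ‖pv‖ = ‖v‖ := by simp [pv]
    rw [hprod, hpu, hpv, hyn] at h1
    exact ⟨le_trans (le_max_left _ _) h1, le_trans (le_max_right _ _) h1⟩
  have hCpos : 0 < C := lt_of_lt_of_le one_pos hC1
  have hfrac : 0 < 1/(2*C^2) ∧ 1/(2*C^2) ≤ 1/2 := by
    constructor
    · positivity
    · rw [div_le_div_iff₀ (by positivity) (by norm_num)]; nlinarith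
  refine ⟨1 - 1/(2*C^2), by linarith [hfrac.1, hfrac.2], by linarith [hfrac.1, hfrac.2], ?_⟩
  have hkey : ∀ u ∈ U, ∀ v ∈ V, ‖u‖ * ‖v‖ * (inner ℝ u v : ℝ) ≤
      (1 - 1/(2*C^2)) * (‖u‖ * ‖v‖) * (‖u‖ * ‖v‖) := by
    intro u hu v hv
    obtain ⟨h1, h2⟩ := hbound (‖v‖ • u) (U.smul_mem _ hu) (‖u‖ • v) (V.smul_mem _ hv)
    have e1 : ‖(‖v‖ • u)‖ = ‖v‖ * ‖u‖ := by
      rw [norm_smul]; simp [abs_of_nonneg (norm_nonneg v)]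
    have e3 : ‖(‖v‖ • u) - (‖u‖ • v)‖^2
        = 2*(‖u‖*‖v‖)^2 - 2*((‖u‖*‖v‖)*(inner ℝ u v : ℝ)) := by
      rw [@norm_sub_sq_real]
      rw [e1, norm_smul, real_inner_smul_left, real_inner_smul_right]
      simp [abs_of_nonneg (norm_nonneg u)]
      ring
    have h4 : (‖u‖*‖v‖)^2 ≤ C^2 * ‖(‖v‖ • u) - (‖u‖ • v)‖^2 := by
      nlinarith [norm_nonneg ((‖v‖ • u) - (‖u‖ • v)), norm_nonneg (‖v‖ • u),
        mul_comm ‖v‖ ‖u‖]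
    have := aux_pair_ineq C (‖u‖*‖v‖) (inner ℝ u v : ℝ) (‖(‖v‖ • u) - (‖u‖ • v)‖^2) hC1 e3 h4
    linarith
  intro u hu v hv
  rcases eq_or_lt_of_le (norm_nonneg u) with h | h
  · simp [← h, norm_eq_zero.1 h.symm]
  rcases eq_or_lt_of_le (norm_nonneg v) with h' | h'
  · simp [← h', norm_eq_zero.1 h'.symm]
  have := hkey u hu v hv
  have hpos : 0 < ‖u‖ * ‖v‖ := mul_pos h h'
  nlinarith

lemma aux_proj_vi {K : Set X} (hK : Convex ℝ K) {x p : X} (h : IsProjOn K x p) :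
    ∀ z ∈ K, (inner ℝ (x - p) (z - p) : ℝ) ≤ 0 := by
  obtain ⟨hpK, hmin⟩ := h
  haveI : Nonempty K := ⟨⟨p, hpK⟩⟩
  have hinf : ‖x - p‖ = ⨅ w : K, ‖x - w‖ := by
    apply le_antisymm
    · apply le_ciInf
      intro w
      simpa [dist_eq_norm] using hmin w w.2
    · exact ciInf_le ⟨0, by rintro r ⟨w, rfl⟩; exact norm_nonneg _⟩ (⟨p, hpK⟩ : K)
  exact (norm_eq_iInf_iff_real_inner_le_zero hK hpK).1 hinf

/-- a point of `A` near `0`, when `A` is distance-close to a submodule on the ball of radius 2 -/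
lemma aux_near_zero (W : Submodule ℝ X) (A : Set X) (hAne : A.Nonempty) {ε r : ℝ} (hr : 0 ≤ r)
    (hAW : ∀ y : X, ‖y‖ ≤ r → |infDist y A - infDist y (W : Set X)| < ε) :
    ∃ z ∈ A, ‖z‖ < ε := by
  have h0 : infDist 0 A < ε := by
    have := hAW 0 (by simp [hr])
    have h0W : infDist (0:X) (W : Set X) = 0 := infDist_zero_of_mem W.zero_mem
    rw [h0W] at this
    calc infDist 0 A = |infDist 0 A - 0| := by
          rw [sub_zero, abs_of_nonneg infDist_nonneg]
    _ < ε := this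
  obtain ⟨z₀, hz₀A, hz₀⟩ := (infDist_lt_iff hAne).1 h0
  rw [dist_comm, dist_zero_right] at hz₀
  exact ⟨z₀, hz₀A, hz₀⟩

/-- cone lemma: relative closeness to a submodule at all scales -/
lemma aux_cone (W : Submodule ℝ X) (A : Set X) (hA : Convex ℝ A) {ε : ℝ} (hε : 0 < ε)
    (hε1 : ε ≤ 1)
    (hAW : ∀ y : X, ‖y‖ ≤ 2 → |infDist y A - infDist y (W : Set X)| < ε)
    {x : X} (hx : x ∈ A) :
    ∃ w ∈ W, ‖x - w‖ ≤ 2*ε*(1 + ‖x‖) := by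
  have hAne : A.Nonempty := ⟨x, hx⟩
  obtain ⟨z₀, hz₀A, hz₀⟩ := aux_near_zero W A hAne (by norm_num : (0:ℝ) ≤ 2) hAW
  set t : ℝ := (max 1 ‖x‖)⁻¹ with ht
  have hmaxpos : (0:ℝ) < max 1 ‖x‖ := lt_of_lt_of_le one_pos (le_max_left _ _)
  have ht0 : 0 < t := inv_pos.2 hmaxpos
  have ht1 : t ≤ 1 := by
    rw [ht]
    exact inv_le_one_of_one_le₀ (le_max_left _ _)
  have htx : t * ‖x‖ ≤ 1 := by
    rw [ht]
    calc (max 1 ‖x‖)⁻¹ * ‖x‖ ≤ (max 1 ‖x‖)⁻¹ * (max 1 ‖x‖) :=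
          mul_le_mul_of_nonneg_left (le_max_right _ _) (le_of_lt ht0)
    _ = 1 := inv_mul_cancel₀ (ne_of_gt hmaxpos)
  set y := (1-t) • z₀ + t • x with hy
  have hyA : y ∈ A := hA hz₀A hx (by linarith) (le_of_lt ht0) (by ring)
  have hyn : ‖y‖ ≤ 2 := by
    calc ‖y‖ ≤ ‖(1-t) • z₀‖ + ‖t • x‖ := norm_add_le _ _
    _ = (1-t)*‖z₀‖ + t*‖x‖ := by
        rw [norm_smul, norm_smul, Real.norm_eq_abs, Real.norm_eq_abs,
          abs_of_nonneg (by linarith : (0:ℝ) ≤ 1-t), abs_of_nonneg (le_of_lt ht0)]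
    _ ≤ 1*ε + 1 := by
        have : (0:ℝ) ≤ 1 - t := by linarith
        nlinarith [norm_nonneg z₀]
    _ ≤ 2 := by linarith
  have hyW : infDist y (W : Set X) < ε := by
    have := hAW y hyn
    have h0A : infDist y A = 0 := infDist_zero_of_mem hyA
    rw [h0A] at this
    calc infDist y (W : Set X) = |0 - infDist y (W : Set X)| := by
          rw [zero_sub, abs_neg, abs_of_nonneg infDist_nonneg]
    _ < ε := this
  obtain ⟨w₀, hw₀W, hw₀⟩ := (infDist_lt_iff ⟨0, W.zero_mem⟩).1 hyW
  rw [dist_eq_norm] at hw₀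
  refine ⟨t⁻¹ • w₀, W.smul_mem _ hw₀W, ?_⟩
  have hxy : x - t⁻¹ • w₀ = (1 - t⁻¹) • z₀ + t⁻¹ • (y - w₀) := by
    rw [hy]
    have htne : t ≠ 0 := ne_of_gt ht0
    match_scalars <;> field_simp <;> ring
  have htinv1 : 1 ≤ t⁻¹ := by
    rw [ht, inv_inv]; exact le_max_left _ _
  have htinv : t⁻¹ ≤ 1 + ‖x‖ := by
    rw [ht, inv_inv]
    rcases le_total 1 ‖x‖ with h | h
    · rw [max_eq_right h]; linarith
    · rw [max_eq_left h]; linarith [norm_nonneg x]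
  calc ‖x - t⁻¹ • w₀‖ = ‖(1 - t⁻¹) • z₀ + t⁻¹ • (y - w₀)‖ := by rw [hxy]
  _ ≤ ‖(1 - t⁻¹) • z₀‖ + ‖t⁻¹ • (y - w₀)‖ := norm_add_le _ _
  _ = (t⁻¹ - 1)*‖z₀‖ + t⁻¹*‖y - w₀‖ := by
      rw [norm_smul, norm_smul, Real.norm_eq_abs, Real.norm_eq_abs,
        abs_of_nonpos (by linarith : 1 - t⁻¹ ≤ 0), abs_of_nonneg (by linarith : (0:ℝ) ≤ t⁻¹)]
      ring_nf
  _ ≤ (t⁻¹ - 1)*ε + t⁻¹*ε := by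
      have h1 : (0:ℝ) ≤ t⁻¹ - 1 := by linarith
      have h2 : (0:ℝ) ≤ t⁻¹ := by linarith
      exact add_le_add (mul_le_mul_of_nonneg_left (le_of_lt hz₀) h1)
        (mul_le_mul_of_nonneg_left (le_of_lt hw₀) h2)
  _ ≤ 2*ε*(1 + ‖x‖) := by nlinarith

lemma aux_sq_le_quad (p a b : ℝ) (ha : 0 ≤ a) (hb : 0 ≤ b)
    (h : p^2 ≤ a*p + b) : p ≤ a + Real.sqrt b := by
  by_contra hc
  push_neg at hc
  have hs : Real.sqrt b ≤ p := le_trans (by linarith [Real.sqrt_nonneg b]) (le_of_lt hc)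
  nlinarith [Real.sq_sqrt hb, Real.sqrt_nonneg b]

/-- the core inequality for one projection step -/
lemma aux_key_ineq {K : Set X} (hK : Convex ℝ K) {x p : X} (hproj : IsProjOn K x p)
    {u q z : X} {c ρ σ ε : ℝ} (hc : 0 ≤ c)
    (hzK : z ∈ K) (hz : ‖z‖ ≤ ε)
    (hu : ‖x - u‖ ≤ ρ) (hq : ‖p - q‖ ≤ σ)
    (hang : (inner ℝ u q : ℝ) ≤ c * (‖u‖ * ‖q‖)) :
    ‖p‖^2 ≤ c*(‖x‖+ρ)*(‖p‖+σ) + ρ*‖p‖ + (‖x‖+ρ)*σ + ε*(‖x‖+‖p‖) := by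
  have hρ : 0 ≤ ρ := le_trans (norm_nonneg _) hu
  have hσ : 0 ≤ σ := le_trans (norm_nonneg _) hq
  have hε : 0 ≤ ε := le_trans (norm_nonneg _) hz
  have hvi : (inner ℝ (x - p) (z - p) : ℝ) ≤ 0 := aux_proj_vi hK hproj z hzK
  have h1 : (inner ℝ (x - p) z : ℝ) ≤ (inner ℝ (x - p) p : ℝ) := by
    have : (inner ℝ (x - p) (z - p) : ℝ) = inner ℝ (x - p) z - inner ℝ (x - p) p :=
      inner_sub_right _ _ _
    linarith [hvi, this.symm.le, this.le]
  have h2 : -(ε*(‖x‖+‖p‖)) ≤ (inner ℝ (x - p) z : ℝ) := by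
    have := abs_real_inner_le_norm (x - p) z
    have hn : ‖x - p‖ ≤ ‖x‖ + ‖p‖ := norm_sub_le _ _
    have habs : |(inner ℝ (x - p) z : ℝ)| ≤ (‖x‖ + ‖p‖) * ε := by
      calc |(inner ℝ (x - p) z : ℝ)| ≤ ‖x - p‖ * ‖z‖ := this
      _ ≤ (‖x‖ + ‖p‖) * ε := by
          apply mul_le_mul hn hz (norm_nonneg _) (by positivity)
    have := neg_abs_le (inner ℝ (x - p) z : ℝ)
    nlinarith
  have h3 : ‖p‖^2 ≤ (inner ℝ x p : ℝ) + ε*(‖x‖+‖p‖) := by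
    have e1 : (inner ℝ (x - p) p : ℝ) = inner ℝ x p - ‖p‖^2 := by
      rw [inner_sub_left, real_inner_self_eq_norm_sq]
    nlinarith
  have h4 : (inner ℝ x p : ℝ) ≤ c*(‖x‖+ρ)*(‖p‖+σ) + ρ*‖p‖ + (‖x‖+ρ)*σ := by
    have e2 : (inner ℝ x p : ℝ) = inner ℝ u q + inner ℝ (x - u) p + (inner ℝ u (p - q) : ℝ) := by
      rw [inner_sub_left, inner_sub_right]; ring
    have b1 : (inner ℝ (x - u) p : ℝ) ≤ ρ*‖p‖ := by
      calc (inner ℝ (x - u) p : ℝ) ≤ ‖x - u‖ * ‖p‖ := real_inner_le_norm _ _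
      _ ≤ ρ*‖p‖ := mul_le_mul_of_nonneg_right hu (norm_nonneg _)
    have b2 : (inner ℝ u (p - q) : ℝ) ≤ ‖u‖*σ := by
      calc (inner ℝ u (p - q) : ℝ) ≤ ‖u‖ * ‖p - q‖ := real_inner_le_norm _ _
      _ ≤ ‖u‖*σ := mul_le_mul_of_nonneg_left hq (norm_nonneg _)
    have bu : ‖u‖ ≤ ‖x‖ + ρ := by
      calc ‖u‖ = ‖x - (x - u)‖ := by rw [sub_sub_cancel]
      _ ≤ ‖x‖ + ‖x - u‖ := norm_sub_le _ _
      _ ≤ ‖x‖ + ρ := by linarith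
    have bq : ‖q‖ ≤ ‖p‖ + σ := by
      calc ‖q‖ = ‖p - (p - q)‖ := by rw [sub_sub_cancel]
      _ ≤ ‖p‖ + ‖p - q‖ := norm_sub_le _ _
      _ ≤ ‖p‖ + σ := by linarith
    have b3 : (inner ℝ u q : ℝ) ≤ c*(‖x‖+ρ)*(‖p‖+σ) := by
      calc (inner ℝ u q : ℝ) ≤ c * (‖u‖ * ‖q‖) := hang
      _ ≤ c*(‖x‖+ρ)*(‖p‖+σ) := by
          have hm : ‖u‖ * ‖q‖ ≤ (‖x‖+ρ)*(‖p‖+σ) :=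
            mul_le_mul bu bq (norm_nonneg _) (by positivity)
          calc c * (‖u‖ * ‖q‖) ≤ c * ((‖x‖+ρ)*(‖p‖+σ)) :=
                mul_le_mul_of_nonneg_left hm hc
          _ = c*(‖x‖+ρ)*(‖p‖+σ) := by ring
    nlinarith
  linarith

lemma aux_stepA_arith (c ε R P : ℝ) (hc0 : 0 ≤ c) (hc1 : c < 1) (hε0 : 0 < ε)
    (hε : ε ≤ (1-c)/20) (hR : 0 ≤ R) (hP : 0 ≤ P)
    (h : P^2 ≤ c*(R+2*ε*(1+R))*(P+2*ε*(1+P)) + (2*ε*(1+R))*P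
        + (R+2*ε*(1+R))*(2*ε*(1+P)) + ε*(R+P)) :
    P ≤ (1+c)/2 * R + 3 := by
  by_contra hcon
  push_neg at hcon
  have hε4 : ε ≤ 1/20 := by linarith
  have hP3 : 3 < P := by nlinarith
  have hR2 : R ≤ 2*P := by nlinarith
  have hc1' : (0:ℝ) ≤ 1 - c := by linarith
  have h2 : P^2 ≤ c*R*P + 10*ε*R*P + 7*ε*P + 7*ε*R + 2*ε := by
    nlinarith [mul_nonneg (mul_nonneg hc1' hε0.le) hR,
      mul_nonneg (mul_nonneg hc1' hε0.le) hP,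
      mul_nonneg (mul_nonneg (mul_nonneg hc1' hε0.le) hR) hP,
      mul_nonneg hc1' hε0.le,
      mul_nonneg (mul_nonneg hε0.le hR) hP,
      mul_nonneg hε0.le hR, mul_nonneg hε0.le hP,
      mul_nonneg (mul_nonneg hε0.le hε0.le) hR,
      mul_nonneg (mul_nonneg hε0.le hε0.le) hP,
      mul_nonneg (mul_nonneg (mul_nonneg hε0.le hε0.le) hR) hP,
      sq_nonneg (R - P), hε0.le,
      mul_nonneg (mul_nonneg (sub_nonneg.2 hε4) hε0.le) hR,
      mul_nonneg (mul_nonneg (sub_nonneg.2 hε4) hε0.le) hP,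
      mul_nonneg (mul_nonneg (mul_nonneg (sub_nonneg.2 hε4) hε0.le) hR) hP,
      mul_nonneg (sub_nonneg.2 hε4) hε0.le]
  have h3 : P^2 ≤ (c*R + 10*ε*R + 22*ε)*P := by
    have t1 : 7*ε*R ≤ 14*ε*P := by nlinarith
    have t2 : 2*ε ≤ ε*P := by nlinarith
    nlinarith
  have h4 : P ≤ c*R + 10*ε*R + 22*ε := by
    have hPpos : 0 < P := by linarith
    nlinarith
  have h5 : 10*ε*R ≤ (1-c)/2*R :=
    mul_le_mul_of_nonneg_right (by linarith) hR
  nlinarith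

/-- Stage A half-step: a norm quasi-contraction valid at all scales. -/
lemma aux_halfA (W₁ W₂ : Submodule ℝ X) {c ε : ℝ} (hc0 : 0 ≤ c) (hc1 : c < 1)
    (hang : ∀ u ∈ W₁, ∀ q ∈ W₂, (inner ℝ u q : ℝ) ≤ c * (‖u‖ * ‖q‖))
    (hε0 : 0 < ε) (hε : ε ≤ (1-c)/20)
    {A' K : Set X} (hA'c : Convex ℝ A') (hKc : Convex ℝ K) (hKne : K.Nonempty)
    (hAWA : ∀ y : X, ‖y‖ ≤ 2 → |infDist y A' - infDist y (W₁ : Set X)| < ε)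
    (hAWK : ∀ y : X, ‖y‖ ≤ 2 → |infDist y K - infDist y (W₂ : Set X)| < ε)
    {x p : X} (hx : x ∈ A') (hproj : IsProjOn K x p) :
    ‖p‖ ≤ (1+c)/2 * ‖x‖ + 3 := by
  have hε1 : ε ≤ 1 := by linarith
  obtain ⟨u, huW, hu⟩ := aux_cone W₁ A' hA'c hε0 hε1 hAWA hx
  obtain ⟨q, hqW, hq⟩ := aux_cone W₂ K hKc hε0 hε1 hAWK hproj.1
  obtain ⟨z, hzK, hz⟩ := aux_near_zero W₂ K hKne (by norm_num : (0:ℝ) ≤ 2) hAWK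
  have hkey := aux_key_ineq hKc hproj hc0 hzK hz.le hu hq (hang u huW q hqW)
  exact aux_stepA_arith c ε ‖x‖ ‖p‖ hc0 hc1 hε0 hε (norm_nonneg _) (norm_nonneg _) hkey

/-- Stage B half-step: sharp contraction on a bounded region. -/
lemma aux_halfB (W₁ W₂ : Submodule ℝ X) {c ε M : ℝ} (hc0 : 0 ≤ c) (hc1 : c < 1)
    (hang : ∀ u ∈ W₁, ∀ q ∈ W₂, (inner ℝ u q : ℝ) ≤ c * (‖u‖ * ‖q‖))
    (hε0 : 0 < ε) (hε1 : ε ≤ 1) (hM : 1 ≤ M)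
    {A' K : Set X} (hKc : Convex ℝ K) (hKne : K.Nonempty)
    (hAWA : ∀ y : X, ‖y‖ ≤ M + 1 → |infDist y A' - infDist y (W₁ : Set X)| < ε)
    (hAWK : ∀ y : X, ‖y‖ ≤ M + 1 → |infDist y K - infDist y (W₂ : Set X)| < ε)
    {x p : X} (hx : x ∈ A') (hproj : IsProjOn K x p)
    (hxM : ‖x‖ ≤ M) (hpM : ‖p‖ ≤ M) :
    ‖p‖ ≤ c * ‖x‖ + Real.sqrt (10*ε*M) := by
  -- x is ε-close to W₁
  have hxW : infDist x (W₁ : Set X) < ε := by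
    have := hAWA x (by linarith)
    have h0A : infDist x A' = 0 := infDist_zero_of_mem hx
    rw [h0A] at this
    calc infDist x (W₁ : Set X) = |0 - infDist x (W₁ : Set X)| := by
          rw [zero_sub, abs_neg, abs_of_nonneg infDist_nonneg]
    _ < ε := this
  obtain ⟨u, huW, hu⟩ := (infDist_lt_iff ⟨0, W₁.zero_mem⟩).1 hxW
  rw [dist_eq_norm] at hu
  have hpW : infDist p (W₂ : Set X) < ε := by
    have := hAWK p (by linarith)
    have h0A : infDist p K = 0 := infDist_zero_of_mem hproj.1
    rw [h0A] at this
    calc infDist p (W₂ : Set X) = |0 - infDist p (W₂ : Set X)| := by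
          rw [zero_sub, abs_neg, abs_of_nonneg infDist_nonneg]
    _ < ε := this
  obtain ⟨q, hqW, hq⟩ := (infDist_lt_iff ⟨0, W₂.zero_mem⟩).1 hpW
  rw [dist_eq_norm] at hq
  obtain ⟨z, hzK, hz⟩ := aux_near_zero W₂ K hKne (by linarith : (0:ℝ) ≤ M+1) hAWK
  have hkey := aux_key_ineq hKc hproj hc0 hzK hz.le hu.le hq.le (hang u huW q hqW)
  have h2 : ‖p‖^2 ≤ (c*‖x‖)*‖p‖ + 10*ε*M := by
    have hc1' : (0:ℝ) ≤ 1 - c := by linarith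
    nlinarith [norm_nonneg x, norm_nonneg p, hε0.le,
      mul_nonneg (mul_nonneg hc1' hε0.le) (norm_nonneg x),
      mul_nonneg (mul_nonneg hc1' hε0.le) (norm_nonneg p),
      mul_nonneg hc1' (mul_nonneg hε0.le hε0.le)]
  have := aux_sq_le_quad ‖p‖ (c*‖x‖) (10*ε*M)
    (mul_nonneg hc0 (norm_nonneg _)) (by positivity) h2
  linarith

end Aux

theorem stmt5 {X : Type*} [NormedAddCommGroup X] [InnerProductSpace ℝ X] [CompleteSpace X]
    (U V : Submodule ℝ X) (hUc : IsClosed (U : Set X)) (hVc : IsClosed (V : Set X))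
    (hUV : U ⊓ V = ⊥) (hsum : IsClosed ((U ⊔ V : Submodule ℝ X) : Set X))
    (An Bn : ℕ → Set X)
    (hAn : ∀ n, (An n).Nonempty ∧ IsClosed (An n) ∧ Convex ℝ (An n))
    (hBn : ∀ n, (Bn n).Nonempty ∧ IsClosed (Bn n) ∧ Convex ℝ (Bn n))
    (hAW : AWTendsto An (U : Set X)) (hBW : AWTendsto Bn (V : Set X))
    (a₀ : X) (a b : ℕ → X) (hab : IsPerturbedAPS An Bn a₀ a b) :
    Filter.Tendsto a Filter.atTop (nhds (0 : X)) ∧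
      Filter.Tendsto b Filter.atTop (nhds (0 : X)) := by
  obtain ⟨c, hc0, hc1, hang⟩ := aux_angle U V hUc hVc hUV hsum
  have hangVU : ∀ v ∈ V, ∀ u ∈ U, (inner ℝ v u : ℝ) ≤ c * (‖v‖ * ‖u‖) := by
    intro v hv u hu
    rw [real_inner_comm]
    calc (inner ℝ u v : ℝ) ≤ c * (‖u‖ * ‖v‖) := hang u hu v hv
    _ = c * (‖v‖ * ‖u‖) := by ring
  obtain ⟨ha0, hstep⟩ := hab
  have hbB : ∀ n : ℕ, b (n+1) ∈ Bn (n+1) := fun n => (hstep n).1.1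
  have haA : ∀ n : ℕ, a (n+1) ∈ An (n+1) := fun n => (hstep n).2.1
  -- Stage A : uniform boundedness of the tail
  set ε₁ : ℝ := (1-c)/20 with hε₁def
  have hε₁0 : 0 < ε₁ := by rw [hε₁def]; linarith
  obtain ⟨n₁, hn₁⟩ := hAW 2 ε₁ hε₁0
  obtain ⟨n₂, hn₂⟩ := hBW 2 ε₁ hε₁0
  set N₀ : ℕ := max (max n₁ n₂) 1 with hN₀def
  have hN₀1 : 1 ≤ N₀ := le_max_right _ _
  have hAW2 : ∀ n ≥ N₀, ∀ y : X, ‖y‖ ≤ 2 → |infDist y (An n) - infDist y (U : Set X)| < ε₁ := by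
    intro n hn y hy
    exact hn₁ n (le_trans (le_trans (le_max_left _ _) (le_max_left _ _)) hn) y (by push_cast; linarith)
  have hBW2 : ∀ n ≥ N₀, ∀ y : X, ‖y‖ ≤ 2 → |infDist y (Bn n) - infDist y (V : Set X)| < ε₁ := by
    intro n hn y hy
    exact hn₂ n (le_trans (le_trans (le_max_right _ _) (le_max_left _ _)) hn) y (by push_cast; linarith)
  set c₂ : ℝ := (1+c)/2 with hc₂def
  have hc₂0 : 0 ≤ c₂ := by rw [hc₂def]; linarith
  have hc₂1 : c₂ < 1 := by rw [hc₂def]; linarith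
  have hc₂h : (1:ℝ)/2 ≤ c₂ := by rw [hc₂def]; linarith
  have hhalf1 : ∀ n ≥ N₀, ‖b (n+1)‖ ≤ c₂ * ‖a n‖ + 3 := by
    intro n hn
    obtain ⟨m, rfl⟩ : ∃ m, n = m + 1 := ⟨n - 1, by omega⟩
    exact aux_halfA U V hc0 hc1 hang hε₁0 (le_refl _)
      (hAn (m+1)).2.2 (hBn (m+1+1)).2.2 (hBn (m+1+1)).1
      (hAW2 (m+1) hn) (hBW2 (m+1+1) (by omega))
      (haA m) (hstep (m+1)).1
  have hhalf2 : ∀ n ≥ N₀, ‖a (n+1)‖ ≤ c₂ * ‖b (n+1)‖ + 3 := by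
    intro n hn
    exact aux_halfA V U hc0 hc1 hangVU hε₁0 (le_refl _)
      (hBn (n+1)).2.2 (hAn (n+1)).2.2 (hAn (n+1)).1
      (hBW2 (n+1) (by omega)) (hAW2 (n+1) (by omega))
      (hbB n) (hstep n).2
  have hfull : ∀ n ≥ N₀, ‖a (n+1)‖ ≤ c₂ * ‖a n‖ + 6 := by
    intro n hn
    have h1 := hhalf1 n hn
    have h2 := hhalf2 n hn
    nlinarith [norm_nonneg (b (n+1)), norm_nonneg (a n)]
  -- the tail of a is bounded
  set S : ℝ := 6/(1-c₂) with hSdef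
  have hc₂1' : 0 < 1 - c₂ := by linarith
  have hS0 : 0 < S := by rw [hSdef]; exact div_pos (by norm_num) hc₂1'
  have hSeq : S*(1-c₂) = 6 := by
    rw [hSdef, div_mul_cancel₀ _ (ne_of_gt hc₂1')]
  set M₁ : ℝ := ‖a N₀‖ + S with hM₁def
  have hMa : ∀ n ≥ N₀, ‖a n‖ ≤ M₁ := by
    intro n hn
    induction n, hn using Nat.le_induction with
    | base => rw [hM₁def]; linarith
    | succ n hn ih =>
      have := hfull n hn
      have hnn := norm_nonneg (a N₀)
      nlinarith [norm_nonneg (a n)]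
  set M : ℝ := M₁ + 4 with hMdef
  have hM1 : 1 ≤ M := by
    rw [hMdef, hM₁def]; linarith [norm_nonneg (a N₀)]
  have hMa' : ∀ n ≥ N₀, ‖a n‖ ≤ M := fun n hn => by
    have := hMa n hn; rw [hMdef]; linarith
  have hMb' : ∀ n ≥ N₀, ‖b (n+1)‖ ≤ M := by
    intro n hn
    have h1 := hhalf1 n hn
    have h2 := hMa n hn
    rw [hMdef]
    nlinarith [norm_nonneg (a n)]
  -- Stage B : contraction with arbitrarily small additive error
  have contr : ∀ δ : ℝ, 0 < δ → ∃ n₃ : ℕ, N₀ ≤ n₃ ∧ ∀ n ≥ n₃,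
      ‖b (n+1)‖ ≤ c * ‖a n‖ + δ ∧ ‖a (n+1)‖ ≤ c * ‖b (n+1)‖ + δ := by
    intro δ hδ
    set ε : ℝ := min 1 (δ^2/(10*M)) with hεdef
    have hε0 : 0 < ε := by
      rw [hεdef]
      apply lt_min one_pos
      positivity
    have hε1 : ε ≤ 1 := min_le_left _ _
    have hsqrt : Real.sqrt (10*ε*M) ≤ δ := by
      have h1 : 10*ε*M ≤ δ^2 := by
        have h2 : ε ≤ δ^2/(10*M) := min_le_right _ _
        have h3 : (0:ℝ) < 10*M := by linarith
        calc 10*ε*M = ε * (10*M) := by ring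
        _ ≤ (δ^2/(10*M)) * (10*M) := mul_le_mul_of_nonneg_right h2 h3.le
        _ = δ^2 := by field_simp
      calc Real.sqrt (10*ε*M) ≤ Real.sqrt (δ^2) := Real.sqrt_le_sqrt h1
      _ = δ := by rw [Real.sqrt_sq hδ.le]
    set N : ℕ := ⌈M⌉₊ + 1 with hNdef
    have hNM : M + 1 ≤ (N:ℝ) := by
      rw [hNdef]; push_cast; linarith [Nat.le_ceil M]
    obtain ⟨m₁, hm₁⟩ := hAW N ε hε0
    obtain ⟨m₂, hm₂⟩ := hBW N ε hε0
    refine ⟨max (max m₁ m₂) N₀, le_max_right _ _, ?_⟩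
    intro n hn
    have hnN₀ : N₀ ≤ n := le_trans (le_max_right _ _) hn
    have hnm₁ : m₁ ≤ n := le_trans (le_trans (le_max_left _ _) (le_max_left _ _)) hn
    have hnm₂ : m₂ ≤ n := le_trans (le_trans (le_max_right _ _) (le_max_left _ _)) hn
    have hAWn : ∀ k ≥ n, ∀ y : X, ‖y‖ ≤ M+1 →
        |infDist y (An k) - infDist y (U : Set X)| < ε := by
      intro k hk y hy
      exact hm₁ k (by omega) y (by linarith)
    have hBWn : ∀ k ≥ n, ∀ y : X, ‖y‖ ≤ M+1 →
        |infDist y (Bn k) - infDist y (V : Set X)| < ε := by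
      intro k hk y hy
      exact hm₂ k (by omega) y (by linarith)
    obtain ⟨m, rfl⟩ : ∃ m, n = m + 1 := ⟨n - 1, by omega⟩
    have hb1 : ‖b (m+1+1)‖ ≤ c * ‖a (m+1)‖ + Real.sqrt (10*ε*M) := by
      apply aux_halfB U V hc0 hc1 hang hε0 hε1 hM1
        (hBn (m+1+1)).2.2 (hBn (m+1+1)).1
        (hAWn (m+1) (le_refl _)) (hBWn (m+1+1) (by omega))
        (haA m) (hstep (m+1)).1
        (hMa' (m+1) hnN₀) (hMb' (m+1) hnN₀)
    have ha1 : ‖a (m+1+1)‖ ≤ c * ‖b (m+1+1)‖ + Real.sqrt (10*ε*M) := by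
      apply aux_halfB V U hc0 hc1 hangVU hε0 hε1 hM1
        (hAn (m+1+1)).2.2 (hAn (m+1+1)).1
        (hBWn (m+1+1) (by omega)) (hAWn (m+1+1) (by omega))
        (hbB (m+1)) (hstep (m+1)).2
        (hMb' (m+1) hnN₀) (hMa' (m+1+1) (by omega))
    exact ⟨by linarith, by linarith⟩
  -- Decay of a
  have decayA : ∀ εT : ℝ, 0 < εT → ∃ nT : ℕ, ∀ n ≥ nT, ‖a n‖ < εT := by
    intro εT hεT
    set δ : ℝ := (1-c)*εT/4 with hδdef
    have hδ0 : 0 < δ := by rw [hδdef]; nlinarith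
    obtain ⟨n₃, hn₃N₀, hn₃⟩ := contr δ hδ0
    have hchain : ∀ n ≥ n₃, ‖a (n+1)‖ ≤ c * ‖a n‖ + 2*δ := by
      intro n hn
      obtain ⟨h1, h2⟩ := hn₃ n hn
      nlinarith [norm_nonneg (b (n+1)), norm_nonneg (a n)]
    have hind : ∀ k : ℕ, ‖a (n₃+k)‖ ≤ c^k * M + εT/2 := by
      intro k
      induction k with
      | zero =>
        simp only [Nat.add_zero, pow_zero, one_mul]
        have := hMa' n₃ hn₃N₀
        linarith
      | succ k ih =>
        have h1 : ‖a (n₃+k+1)‖ ≤ c * ‖a (n₃+k)‖ + 2*δ := hchain (n₃+k) (by omega)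
        have h2 : c * ‖a (n₃+k)‖ ≤ c * (c^k * M + εT/2) :=
          mul_le_mul_of_nonneg_left ih hc0
        have h3 : c * (c^k * M + εT/2) + 2*δ = c^(k+1)*M + (c*εT/2 + (1-c)*εT/2) := by
          rw [hδdef]; ring
        have h4 : c*εT/2 + (1-c)*εT/2 = εT/2 := by ring
        have : n₃ + (k+1) = n₃ + k + 1 := by omega
        rw [this]
        calc ‖a (n₃+k+1)‖ ≤ c * (c^k * M + εT/2) + 2*δ := by linarith
        _ = c^(k+1)*M + εT/2 := by rw [h3, h4]
    obtain ⟨k₀, hk₀⟩ := exists_pow_lt_of_lt_one (show (0:ℝ) < εT/(2*M) by positivity) hc1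
    have hk₀M : c^k₀ * M < εT/2 := by
      have hMpos : (0:ℝ) < M := by linarith
      calc c^k₀ * M < (εT/(2*M)) * M := mul_lt_mul_of_pos_right hk₀ hMpos
      _ = εT/2 := by field_simp
    refine ⟨n₃ + k₀, ?_⟩
    intro n hn
    obtain ⟨k, rfl⟩ : ∃ k, n = n₃ + k := ⟨n - n₃, by omega⟩
    have hkk₀ : k₀ ≤ k := by omega
    have hpow : c^k ≤ c^k₀ := pow_le_pow_of_le_one hc0 hc1.le hkk₀
    have hMpos : (0:ℝ) ≤ M := by linarith
    calc ‖a (n₃+k)‖ ≤ c^k * M + εT/2 := hind k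
    _ ≤ c^k₀ * M + εT/2 := by nlinarith
    _ < εT/2 + εT/2 := by linarith
    _ = εT := by ring
  -- Decay of b
  have decayB : ∀ εT : ℝ, 0 < εT → ∃ nT : ℕ, ∀ n ≥ nT, ‖b n‖ < εT := by
    intro εT hεT
    obtain ⟨na, hna⟩ := decayA (εT/2) (by linarith)
    obtain ⟨n₃, _, hn₃⟩ := contr (εT/4) (by linarith)
    refine ⟨max na n₃ + 1, ?_⟩
    intro n hn
    obtain ⟨m, rfl⟩ : ∃ m, n = m + 1 := ⟨n - 1, by omega⟩
    have hmna : na ≤ m := by omega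
    have hmn₃ : n₃ ≤ m := by omega
    have h1 := (hn₃ m hmn₃).1
    have h2 := hna m hmna
    have h3 : c * ‖a m‖ ≤ ‖a m‖ := by nlinarith [norm_nonneg (a m)]
    linarith
  constructor
  · rw [Metric.tendsto_atTop]
    intro ε hε
    obtain ⟨nT, hnT⟩ := decayA ε hε
    exact ⟨nT, fun n hn => by rw [dist_zero_right]; exact hnT n hn⟩
  · rw [Metric.tendsto_atTop]
    intro ε hε
    obtain ⟨nT, hnT⟩ := decayB ε hε
    exact ⟨nT, fun n hn => by rw [dist_zero_right]; exact hnT n hn⟩
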